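/- If f and g are nonnegative differentiable functions on ℝ that are both L-sqrt-Lipschitz, then for any α ∈ [0,1], the function (1-α)f + αg is also L-sqrt-Lipschitz. -/

import Mathlib

/-- If `f` and `g` are nonnegative differentiable `L`-sqrt-Lipschitz functions on `ℝ`,
then for any `α ∈ [0,1]` the function `(1-α)f + αg` is also `L`-sqrt-Lipschitz. -/
theorem sqrt_lipschitz_convex_combination (f g : ℝ → ℝ) (L : ℝ)
    (hf0 : ∀ x, 0 ≤ f x) (hg0 : ∀ x, 0 ≤ g x)
    (hfd : Differentiable ℝ f) (hgd : Differentiable ℝ g)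
    (hf : ∀ x, |deriv f x| ≤ 2 * L * Real.sqrt (f x))
    (hg : ∀ x, |deriv g x| ≤ 2 * L * Real.sqrt (g x))
    (α : ℝ) (hα : α ∈ Set.Icc (0 : ℝ) 1) :
    ∀ x, |deriv (fun t => (1 - α) * f t + α * g t) x| ≤
      2 * L * Real.sqrt ((1 - α) * f x + α * g x) := by
  obtain ⟨hα0, hα1⟩ := hα
  intro x
  have hd : deriv (fun t => (1 - α) * f t + α * g t) x
      = (1 - α) * deriv f x + α * deriv g x := by
    rw [deriv_fun_add ((hfd x).const_mul _) ((hgd x).const_mul _),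
      deriv_const_mul _ (hfd x), deriv_const_mul _ (hgd x)]
  rw [hd]
  have h1α : (0:ℝ) ≤ 1 - α := by linarith
  set a := f x with ha
  set b := g x with hb
  set sa := Real.sqrt a with hsa
  set sb := Real.sqrt b with hsb
  set sc := Real.sqrt ((1 - α) * a + α * b) with hsc
  have hcomb : (0:ℝ) ≤ (1 - α) * a + α * b := by
    have := hf0 x; have := hg0 x
    positivity
  have hsa2 : sa ^ 2 = a := Real.sq_sqrt (hf0 x)
  have hsb2 : sb ^ 2 = b := Real.sq_sqrt (hg0 x)
  have hsc2 : sc ^ 2 = (1 - α) * a + α * b := Real.sq_sqrt hcomb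
  have hsa0 : 0 ≤ sa := Real.sqrt_nonneg _
  have hsb0 : 0 ≤ sb := Real.sqrt_nonneg _
  have hsc0 : 0 ≤ sc := Real.sqrt_nonneg _
  -- concavity of sqrt
  have hkey : (1 - α) * sa + α * sb ≤ sc := by
    have hsq : ((1 - α) * sa + α * sb) ^ 2 ≤ sc ^ 2 := by
      rw [hsc2]
      nlinarith [sq_nonneg (sa - sb), mul_nonneg hα0 h1α]
    nlinarith [mul_nonneg h1α hsa0, mul_nonneg hα0 hsb0]
  have hLa : 0 ≤ 2 * L * sa := le_trans (abs_nonneg _) (hf x)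
  have hLb : 0 ≤ 2 * L * sb := le_trans (abs_nonneg _) (hg x)
  calc |(1 - α) * deriv f x + α * deriv g x|
      ≤ (1 - α) * |deriv f x| + α * |deriv g x| := by
        refine le_trans (abs_add_le _ _) ?_
        rw [abs_mul, abs_mul, abs_of_nonneg h1α, abs_of_nonneg hα0]
    _ ≤ (1 - α) * (2 * L * sa) + α * (2 * L * sb) := by
        gcongr <;> [exact hf x; exact hg x]
    _ ≤ 2 * L * sc := by
        rcases le_or_gt 0 L with hL | hL
        · nlinarith
        · have h1 : sa = 0 := le_antisymm (by nlinarith) hsa0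
          have h2 : sb = 0 := le_antisymm (by nlinarith) hsb0
          have h3 : a = 0 := by nlinarith
          have h4 : b = 0 := by nlinarith
          have h5 : sc = 0 := by
            rw [hsc, h3, h4]; simp
          simp [h1, h2, h5]
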